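/- Let N ≥ 0 and 0 ≤ i ≤ N be integers. Then ∫_{−1}^{1} ((1−c)/2)^{2+2(N−i)} · (P_i^{(2N+3−2i,0)}(c))² dc = 2/(2N+3−2i). In particular this value is a positive constant depending only on N and i. -/

import Mathlib

open Finset in
/-- The Jacobi polynomial `P_n^{(α,0)}` (as a real function), defined by the explicit
formula `P_n^{(α,0)}(x) = ∑_{s=0}^{n} C(n+α, n−s)·C(n, s)·((x−1)/2)^s·((x+1)/2)^{n−s}`. -/
noncomputable def jacobiP (n α : ℕ) (x : ℝ) : ℝ :=
  ∑ s ∈ range (n + 1),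
    ((n + α).choose (n - s) : ℝ) * (n.choose s : ℝ) * ((x - 1) / 2) ^ s * ((x + 1) / 2) ^ (n - s)

namespace JacobiAux

open Finset intervalIntegral

/-- Shifted Jacobi polynomial `P_n^{(a,0)}(1-2u)`. -/
noncomputable def Sfun (n a : ℕ) (u : ℝ) : ℝ :=
  ∑ s ∈ range (n + 1),
    ((n + a).choose (n - s) : ℝ) * (n.choose s : ℝ) * (-u) ^ s * (1 - u) ^ (n - s)

lemma contS (n a : ℕ) : Continuous (Sfun n a) := by
  unfold Sfun
  exact continuous_finset_sum _ fun s _ => by fun_prop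

lemma jacobi_comp (n a : ℕ) (u : ℝ) : jacobiP n a (1 - 2 * u) = Sfun n a u := by
  unfold jacobiP Sfun
  refine Finset.sum_congr rfl fun s _ => ?_
  have h1 : (1 - 2*u - 1)/2 = -u := by ring
  have h2 : (1 - 2*u + 1)/2 = 1 - u := by ring
  rw [h1, h2]

lemma diff_step (f : ℕ → ℝ) (n : ℕ) :
    ∑ s ∈ range (n + 2), (-1 : ℝ) ^ s * ((n+1).choose s : ℝ) * f s
      = ∑ s ∈ range (n + 1), (-1 : ℝ) ^ s * (n.choose s : ℝ) * (f s - f (s+1)) := by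
  have hsplit := Finset.sum_range_succ' (fun s => (-1:ℝ)^s * ((n+1).choose s : ℝ) * f s) (n+1)
  rw [hsplit]
  have h1 : ∀ s, (-1:ℝ)^(s+1) * ((n+1).choose (s+1) : ℝ) * f (s+1)
      = -((-1:ℝ)^s * (n.choose s : ℝ) * f (s+1)) + ((-1:ℝ)^(s+1) * (n.choose (s+1) : ℝ) * f (s+1)) := by
    intro s
    rw [Nat.choose_succ_succ]
    push_cast
    ring
  rw [Finset.sum_congr rfl fun s _ => h1 s, Finset.sum_add_distrib]
  have h2 : ∑ s ∈ range (n+1), (-1:ℝ)^(s+1) * (n.choose (s+1) : ℝ) * f (s+1)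
      = ∑ s ∈ range (n+1), (-1:ℝ)^s * (n.choose s : ℝ) * f s - f 0 := by
    have e1 := Finset.sum_range_succ' (fun t => (-1:ℝ)^t * (n.choose t : ℝ) * f t) (n+1)
    have e2 := Finset.sum_range_succ (fun t => (-1:ℝ)^t * (n.choose t : ℝ) * f t) (n+1)
    simp only [Nat.choose_succ_self, Nat.cast_zero, mul_zero, zero_mul, add_zero,
      Nat.choose_zero_right, Nat.cast_one, pow_zero, one_mul, mul_one] at e1 e2
    linarith
  rw [h2]
  have h3 : ∑ s ∈ range (n+1), (-1:ℝ)^s * (n.choose s : ℝ) * (f s - f (s+1))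
      = ∑ s ∈ range (n+1), (-1:ℝ)^s * (n.choose s : ℝ) * f s
        - ∑ s ∈ range (n+1), (-1:ℝ)^s * (n.choose s : ℝ) * f (s+1) := by
    rw [← Finset.sum_sub_distrib]
    exact Finset.sum_congr rfl fun s _ => by ring
  rw [h3, Finset.sum_neg_distrib]
  simp only [Nat.choose_zero_right, Nat.cast_one, pow_zero, one_mul, mul_one]
  ring

lemma alt_inv (n : ℕ) : ∀ b : ℕ,
    ∑ s ∈ range (n + 1), (-1 : ℝ) ^ s * (n.choose s : ℝ) / ((b : ℝ) + 1 + s)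
      = (n.factorial : ℝ) * (b.factorial : ℝ) / ((n + b + 1).factorial : ℝ) := by
  induction n with
  | zero =>
      intro b
      rw [Finset.sum_range_one]
      have h0 : (0:ℕ) + b + 1 = b + 1 := by omega
      rw [h0, Nat.factorial_succ]
      have hb : ((b:ℝ) + 1) ≠ 0 := by positivity
      have hf : (b.factorial : ℝ) ≠ 0 := by positivity
      push_cast
      field_simp
      simp
  | succ n ih =>
      intro b
      have hd := diff_step (fun s => 1 / ((b:ℝ) + 1 + s)) n
      have hl : ∑ s ∈ range (n + 2), (-1 : ℝ) ^ s * ((n+1).choose s : ℝ) / ((b : ℝ) + 1 + s)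
          = ∑ s ∈ range (n + 2), (-1 : ℝ) ^ s * ((n+1).choose s : ℝ) * (1 / ((b:ℝ) + 1 + s)) :=
        Finset.sum_congr rfl fun s _ => by ring
      rw [hl, hd]
      have hsplit : ∑ s ∈ range (n + 1), (-1 : ℝ) ^ s * (n.choose s : ℝ)
            * (1 / ((b:ℝ) + 1 + s) - 1 / ((b:ℝ) + 1 + (s+1:ℕ)))
          = ∑ s ∈ range (n + 1), (-1 : ℝ) ^ s * (n.choose s : ℝ) / ((b : ℝ) + 1 + s)
            - ∑ s ∈ range (n + 1), (-1 : ℝ) ^ s * (n.choose s : ℝ) / (((b+1 : ℕ) : ℝ) + 1 + s) := by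
        rw [← Finset.sum_sub_distrib]
        refine Finset.sum_congr rfl fun s _ => by push_cast; ring
      rw [hsplit, ih b, ih (b+1)]
      have h1 : ((n + b + 1 + 1).factorial : ℝ) = (n + b + 2) * (n + b + 1).factorial := by
        have : n + b + 1 + 1 = (n + b + 1) + 1 := by ring
        rw [this, Nat.factorial_succ]; push_cast; ring
      have h2 : ((n + (b+1) + 1).factorial : ℝ) = (n + b + 2) * (n + b + 1).factorial := by
        have : n + (b+1) + 1 = (n + b + 1) + 1 := by ring
        rw [this, Nat.factorial_succ]; push_cast; ring
      have h3 : ((n+1 : ℕ).factorial : ℝ) = (n + 1) * n.factorial := by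
        rw [Nat.factorial_succ]; push_cast; ring
      have h4 : (((b:ℕ)+1).factorial : ℝ) = (b + 1) * b.factorial := by
        rw [Nat.factorial_succ]; push_cast; ring
      have h5 : (n+1) + b + 1 = n + b + 1 + 1 := by ring
      rw [h5, h1, h2, h3, h4]
      have hf1 : ((n + b + 1).factorial : ℝ) ≠ 0 := by positivity
      have hne : (n : ℝ) + b + 2 ≠ 0 := by positivity
      field_simp
      ring

lemma alt_prod : ∀ n k a : ℕ, k < n →
    ∑ s ∈ range (n + 1), (-1 : ℝ) ^ s * (n.choose s : ℝ)
      * (∏ j ∈ range k, ((a : ℝ) + s + 1 + j)) = 0 := by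
  intro n
  induction n with
  | zero => intro k a h; exact absurd h (Nat.not_lt_zero k)
  | succ n ih =>
      intro k a hk
      have hd := diff_step (fun s => ∏ j ∈ range k, ((a:ℝ) + s + 1 + j)) n
      rw [hd]
      rcases k with _ | k
      · simp
      · have hstep : ∀ s : ℕ,
            (∏ j ∈ range (k+1), ((a:ℝ) + s + 1 + j))
              - (∏ j ∈ range (k+1), ((a:ℝ) + ((s+1 : ℕ) : ℝ) + 1 + j))
            = -((k:ℝ)+1) * ∏ j ∈ range k, (((a+1 : ℕ) : ℝ) + s + 1 + j) := by
          intro s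
          rw [Finset.prod_range_succ' (fun j => (a:ℝ) + s + 1 + j) k,
              Finset.prod_range_succ (fun j => (a:ℝ) + ((s+1:ℕ):ℝ) + 1 + j) k]
          have e1 : (∏ j ∈ range k, ((a:ℝ) + s + 1 + ((j+1 : ℕ) : ℝ)))
              = ∏ j ∈ range k, (((a+1 : ℕ) : ℝ) + s + 1 + j) :=
            Finset.prod_congr rfl fun j _ => by push_cast; ring
          have e2 : (∏ j ∈ range k, ((a:ℝ) + ((s+1:ℕ):ℝ) + 1 + j))
              = ∏ j ∈ range k, (((a+1 : ℕ) : ℝ) + s + 1 + j) :=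
            Finset.prod_congr rfl fun j _ => by push_cast; ring
          rw [e1, e2]
          push_cast
          ring
        have hc : ∑ s ∈ range (n+1), (-1:ℝ)^s * (n.choose s : ℝ)
              * ((∏ j ∈ range (k+1), ((a:ℝ) + s + 1 + j))
                - (∏ j ∈ range (k+1), ((a:ℝ) + ((s+1:ℕ):ℝ) + 1 + j)))
            = -((k:ℝ)+1) * ∑ s ∈ range (n+1), (-1:ℝ)^s * (n.choose s : ℝ)
              * ∏ j ∈ range k, (((a+1 : ℕ) : ℝ) + s + 1 + j) := by
          rw [Finset.mul_sum]
          exact Finset.sum_congr rfl fun s _ => by rw [hstep s]; ring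
        rw [hc, ih k (a+1) (by omega), mul_zero]

lemma beta_int (p q : ℕ) :
    ∫ u in (0:ℝ)..1, u ^ p * (1 - u) ^ q
      = (p.factorial : ℝ) * (q.factorial : ℝ) / ((p + q + 1).factorial : ℝ) := by
  have hexp : (fun u : ℝ => u ^ p * (1 - u) ^ q)
      = fun u : ℝ => ∑ t ∈ range (q + 1), ((q.choose t : ℝ) * (-1) ^ t) * u ^ (p + t) := by
    funext u
    have h1 : (1 - u) ^ q = ((-u) + 1) ^ q := by ring_nf
    rw [h1, add_pow, Finset.mul_sum]
    refine Finset.sum_congr rfl fun t _ => ?_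
    rw [neg_pow, pow_add]
    ring
  rw [hexp, intervalIntegral.integral_finset_sum (fun t _ => by
    apply Continuous.intervalIntegrable; fun_prop)]
  have hterm : ∀ t ∈ range (q+1),
      (∫ u in (0:ℝ)..1, ((q.choose t : ℝ) * (-1) ^ t) * u ^ (p+t))
      = (-1:ℝ)^t * (q.choose t : ℝ) / ((p : ℝ) + 1 + t) := by
    intro t _
    rw [intervalIntegral.integral_const_mul, integral_pow]
    norm_num
    rw [eq_div_iff (by positivity)]
    field_simp
    ring
  rw [Finset.sum_congr rfl hterm, alt_inv q p]
  have h5 : q + p + 1 = p + q + 1 := by omega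
  rw [h5]
  ring

lemma fact_prod (m : ℕ) : ∀ k : ℕ, (m + k).factorial = m.factorial * ∏ j ∈ range k, (m + 1 + j) := by
  intro k
  induction k with
  | zero => simp
  | succ k ih =>
      rw [Finset.prod_range_succ, ← mul_assoc, ← ih]
      have : m + (k+1) = (m + k) + 1 := by omega
      rw [this, Nat.factorial_succ]
      ring

lemma key_nat (n a k s : ℕ) (h : s ≤ n) :
    (n + a).choose (n - s) * (n - s).factorial * (a + k + s).factorial
      = (n + a).factorial * ∏ j ∈ range k, (a + s + 1 + j) := by
  have h1 : n - s ≤ n + a := by omega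
  have h2 := Nat.choose_mul_factorial_mul_factorial h1
  have h3 : n + a - (n - s) = a + s := by omega
  rw [h3] at h2
  have h4 : a + k + s = (a + s) + k := by omega
  rw [h4, fact_prod]
  calc (n + a).choose (n - s) * (n - s).factorial
        * ((a+s).factorial * ∏ j ∈ range k, (a + s + 1 + j))
      = ((n + a).choose (n - s) * (n - s).factorial * (a+s).factorial)
        * ∏ j ∈ range k, (a + s + 1 + j) := by ring
    _ = (n + a).factorial * ∏ j ∈ range k, (a + s + 1 + j) := by rw [h2]

lemma mom_zero (n a k : ℕ) (hk : k < n) :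
    ∫ u in (0:ℝ)..1, u ^ (a + k) * Sfun n a u = 0 := by
  have hfun : (fun u : ℝ => u ^ (a+k) * Sfun n a u)
      = fun u : ℝ => ∑ s ∈ range (n+1),
        (((n + a).choose (n - s) : ℝ) * (n.choose s : ℝ) * (-1)^s)
          * (u ^ (a + k + s) * (1 - u) ^ (n - s)) := by
    funext u
    unfold Sfun
    rw [Finset.mul_sum]
    refine Finset.sum_congr rfl fun s _ => ?_
    rw [neg_pow, pow_add, pow_add]
    ring
  rw [hfun, intervalIntegral.integral_finset_sum (fun s _ => by
    apply Continuous.intervalIntegrable; fun_prop)]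
  have hterm : ∀ s ∈ range (n+1),
      (∫ u in (0:ℝ)..1, (((n + a).choose (n - s) : ℝ) * (n.choose s : ℝ) * (-1)^s)
          * (u ^ (a + k + s) * (1 - u) ^ (n - s)))
      = (((n+a).factorial : ℝ) / ((n+a+k+1).factorial : ℝ))
        * ((-1:ℝ)^s * (n.choose s : ℝ) * ∏ j ∈ range k, ((a:ℝ) + s + 1 + j)) := by
    intro s hs
    have hsn : s ≤ n := by simpa using Nat.lt_succ_iff.mp (Finset.mem_range.mp hs)
    rw [intervalIntegral.integral_const_mul, beta_int]
    have hE : a + k + s + (n - s) + 1 = n + a + k + 1 := by omega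
    rw [hE]
    have hkeyR := congrArg (fun x : ℕ => (x : ℝ)) (key_nat n a k s hsn)
    push_cast at hkeyR
    have hne : ((n+a+k+1).factorial : ℝ) ≠ 0 := by positivity
    field_simp
    linear_combination (n.choose s : ℝ) * hkeyR
  rw [Finset.sum_congr rfl hterm, ← Finset.mul_sum, alt_prod n k a hk, mul_zero]

lemma mom_base (n a : ℕ) :
    ∫ u in (0:ℝ)..1, u ^ a * Sfun n (a+1) u
      = (n.factorial : ℝ) * (a.factorial : ℝ) / ((n + a + 1).factorial : ℝ) := by
  have hfun : (fun u : ℝ => u ^ a * Sfun n (a+1) u)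
      = fun u : ℝ => ∑ s ∈ range (n+1),
        (((n + (a+1)).choose (n - s) : ℝ) * (n.choose s : ℝ) * (-1)^s)
          * (u ^ (a + s) * (1 - u) ^ (n - s)) := by
    funext u
    unfold Sfun
    rw [Finset.mul_sum]
    refine Finset.sum_congr rfl fun s _ => ?_
    rw [neg_pow, pow_add]
    ring
  rw [hfun, intervalIntegral.integral_finset_sum (fun s _ => by
    apply Continuous.intervalIntegrable; fun_prop)]
  have hterm : ∀ s ∈ range (n+1),
      (∫ u in (0:ℝ)..1, (((n + (a+1)).choose (n - s) : ℝ) * (n.choose s : ℝ) * (-1)^s)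
          * (u ^ (a + s) * (1 - u) ^ (n - s)))
      = (-1:ℝ)^s * (n.choose s : ℝ) / ((a:ℝ) + 1 + s) := by
    intro s hs
    have hsn : s ≤ n := by simpa using Nat.lt_succ_iff.mp (Finset.mem_range.mp hs)
    rw [intervalIntegral.integral_const_mul, beta_int]
    have hE : a + s + (n - s) + 1 = n + (a+1) := by omega
    rw [hE]
    have hkey := key_nat n (a+1) 0 s hsn
    simp only [Finset.range_zero, Finset.prod_empty, mul_one] at hkey
    have h1 : a + 1 + 0 + s = (a + s) + 1 := by omega
    rw [h1, Nat.factorial_succ] at hkey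
    have hkeyR := congrArg (fun x : ℕ => (x : ℝ)) hkey
    push_cast at hkeyR
    have hne : ((n+(a+1)).factorial : ℝ) ≠ 0 := by positivity
    have hne2 : ((a:ℝ) + 1 + s) ≠ 0 := by positivity
    field_simp
    linear_combination (n.choose s : ℝ) * hkeyR
  rw [Finset.sum_congr rfl hterm, alt_inv n a]

lemma mom_gen (n a m : ℕ) (hm : m ≤ n) :
    ∫ u in (0:ℝ)..1, u ^ (a + m) * Sfun n (a+1) u
      = if m = 0 then (n.factorial : ℝ) * (a.factorial : ℝ) / ((n + a + 1).factorial : ℝ)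
        else 0 := by
  rcases m with _ | m
  · simpa using mom_base n a
  · have h1 : a + (m+1) = (a+1) + m := by omega
    rw [h1, mom_zero n (a+1) m (by omega)]
    simp

lemma mom_gen2 (n a s q : ℕ) (h : s + q ≤ n) :
    ∫ u in (0:ℝ)..1, u ^ (a + s) * (1 - u) ^ q * Sfun n (a+1) u
      = if s = 0 then (n.factorial : ℝ) * (a.factorial : ℝ) / ((n + a + 1).factorial : ℝ)
        else 0 := by
  have hfun : (fun u : ℝ => u ^ (a+s) * (1-u) ^ q * Sfun n (a+1) u)
      = fun u : ℝ => ∑ t ∈ range (q+1),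
        ((q.choose t : ℝ) * (-1)^t) * (u ^ (a + (s + t)) * Sfun n (a+1) u) := by
    funext u
    have h1 : (1 - u) ^ q = ∑ t ∈ range (q+1), (-u)^t * 1^(q-t) * (q.choose t : ℝ) := by
      rw [← add_pow]; ring_nf
    rw [h1, Finset.mul_sum, Finset.sum_mul]
    refine Finset.sum_congr rfl fun t _ => ?_
    rw [neg_pow, pow_add, pow_add]
    ring
  rw [hfun, intervalIntegral.integral_finset_sum (fun t _ => by
    apply Continuous.intervalIntegrable
    exact (continuous_const.mul ((continuous_pow _).mul (contS n (a+1)))))]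
  have hterm : ∀ t ∈ range (q+1),
      (∫ u in (0:ℝ)..1, ((q.choose t : ℝ) * (-1)^t) * (u ^ (a + (s+t)) * Sfun n (a+1) u))
      = ((q.choose t : ℝ) * (-1)^t) *
        (if s + t = 0 then (n.factorial : ℝ) * (a.factorial : ℝ) / ((n + a + 1).factorial : ℝ)
          else 0) := by
    intro t ht
    have htq : t ≤ q := by simpa using Nat.lt_succ_iff.mp (Finset.mem_range.mp ht)
    rw [intervalIntegral.integral_const_mul, mom_gen n a (s+t) (by omega)]
  rw [Finset.sum_congr rfl hterm]
  rcases Nat.eq_zero_or_pos s with hs | hs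
  · subst hs
    rw [Finset.sum_eq_single 0]
    · simp
    · intro t _ ht0; simp [ht0]
    · intro h0; exact absurd (Finset.mem_range.mpr (Nat.succ_pos q)) h0
  · have : ∀ t ∈ range (q+1), ((q.choose t : ℝ) * (-1)^t) *
        (if s + t = 0 then (n.factorial : ℝ) * (a.factorial : ℝ) / ((n + a + 1).factorial : ℝ)
          else 0) = 0 := by
      intro t _
      have : s + t ≠ 0 := by omega
      simp [this, hs.ne']
    rw [Finset.sum_eq_zero this]
    have : s ≠ 0 := by omega
    simp [this]

lemma main_u (n a : ℕ) :
    ∫ u in (0:ℝ)..1, u ^ a * (Sfun n (a+1) u) ^ 2 = 1 / ((a : ℝ) + 1) := by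
  have hfun : (fun u : ℝ => u ^ a * (Sfun n (a+1) u) ^ 2)
      = fun u : ℝ => ∑ s ∈ range (n+1),
        (((n + (a+1)).choose (n - s) : ℝ) * (n.choose s : ℝ) * (-1)^s)
          * (u ^ (a + s) * (1 - u) ^ (n - s) * Sfun n (a+1) u) := by
    funext u
    have h1 : (Sfun n (a+1) u) ^ 2 = Sfun n (a+1) u * Sfun n (a+1) u := sq (Sfun n (a+1) u) ▸ by ring
    nth_rewrite 1 [h1]
    nth_rewrite 1 [Sfun]
    rw [Finset.sum_mul, Finset.mul_sum]
    refine Finset.sum_congr rfl fun s _ => ?_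
    rw [neg_pow, pow_add]
    ring
  rw [hfun, intervalIntegral.integral_finset_sum (fun s _ => by
    apply Continuous.intervalIntegrable
    exact continuous_const.mul (((continuous_pow _).mul (by fun_prop)).mul (contS n (a+1))))]
  have hterm : ∀ s ∈ range (n+1),
      (∫ u in (0:ℝ)..1, (((n + (a+1)).choose (n - s) : ℝ) * (n.choose s : ℝ) * (-1)^s)
          * (u ^ (a + s) * (1 - u) ^ (n - s) * Sfun n (a+1) u))
      = (((n + (a+1)).choose (n - s) : ℝ) * (n.choose s : ℝ) * (-1)^s) *
        (if s = 0 then (n.factorial : ℝ) * (a.factorial : ℝ) / ((n + a + 1).factorial : ℝ)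
          else 0) := by
    intro s hs
    have hsn : s ≤ n := by simpa using Nat.lt_succ_iff.mp (Finset.mem_range.mp hs)
    have hmul : (fun u : ℝ => u ^ (a + s) * (1 - u) ^ (n - s) * Sfun n (a+1) u)
        = fun u : ℝ => u ^ (a + s) * (1 - u) ^ (n-s) * Sfun n (a+1) u := rfl
    rw [intervalIntegral.integral_const_mul, mom_gen2 n a s (n - s) (by omega)]
  rw [Finset.sum_congr rfl hterm]
  rw [Finset.sum_eq_single 0]
  · simp only [Nat.sub_zero, Nat.choose_zero_right, Nat.cast_one, pow_zero, mul_one, one_mul,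
      if_pos rfl, ↓reduceIte]
    have h2 : n + (a+1) = n + a + 1 := by omega
    rw [h2]
    have hc : n ≤ n + a + 1 := by omega
    have hkey := Nat.choose_mul_factorial_mul_factorial hc
    have h1 : n + a + 1 - n = a + 1 := by omega
    rw [h1, Nat.factorial_succ] at hkey
    have hkeyR := congrArg (fun x : ℕ => (x : ℝ)) hkey
    push_cast at hkeyR
    have hne : ((n+a+1).factorial : ℝ) ≠ 0 := by positivity
    have hne2 : ((a:ℝ) + 1) ≠ 0 := by positivity
    have hne3 : (n.factorial : ℝ) ≠ 0 := by positivity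
    have hne4 : (a.factorial : ℝ) ≠ 0 := by positivity
    field_simp
    linear_combination hkeyR
  · intro s _ hs0; simp [hs0]
  · intro h0; exact absurd (Finset.mem_range.mpr (Nat.succ_pos n)) h0

end JacobiAux

open Finset JacobiAux in
/-- For integers `N ≥ 0` and `0 ≤ i ≤ N`,
`∫_{−1}^{1} ((1−c)/2)^{2+2(N−i)} · (P_i^{(2N+3−2i,0)}(c))² dc = 2/(2N+3−2i)`;
in particular this value is a positive constant depending only on `N` and `i`. -/
theorem jacobi_weighted_norm (N i : ℕ) (hiN : i ≤ N) :
    (∫ c in (-1 : ℝ)..1,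
        ((1 - c) / 2) ^ (2 + 2 * (N - i)) * (jacobiP i (2 * N + 3 - 2 * i) c) ^ 2
      = 2 / (2 * (N : ℝ) + 3 - 2 * (i : ℝ)))
    ∧ 0 < 2 / (2 * (N : ℝ) + 3 - 2 * (i : ℝ)) := by
  set b : ℕ := 2 + 2 * (N - i) with hb
  have hA : 2 * N + 3 - 2 * i = b + 1 := by omega
  set g : ℝ → ℝ := fun c => ((1 - c) / 2) ^ b * (jacobiP i (b + 1) c) ^ 2 with hg
  have hiR : (i : ℝ) ≤ N := Nat.cast_le.mpr hiN
  have hden : (0:ℝ) < 2 * (N : ℝ) + 3 - 2 * (i : ℝ) := by linarith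
  constructor
  · rw [hA]
    have hsub : (∫ c in (-1 : ℝ)..1, g c) = 2 * ∫ u in (0:ℝ)..1, g (1 - 2 * u) := by
      have e1 := intervalIntegral.integral_comp_mul_left (fun v => g (1 - v)) (two_ne_zero (α := ℝ))
        (a := 0) (b := 1)
      have e2 := intervalIntegral.integral_comp_sub_left g (1 : ℝ) (a := 0) (b := 2)
      simp only [mul_zero, mul_one] at e1
      rw [show (1:ℝ) - 2 = -1 by norm_num, show (1:ℝ) - 0 = 1 by norm_num] at e2
      rw [e2] at e1
      rw [show (∫ u in (0:ℝ)..1, g (1 - 2 * u)) = ∫ u in (0:ℝ)..1, (fun v => g (1 - v)) (2 * u)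
        from rfl, e1]
      simp
    rw [hsub]
    have hgu : ∀ u : ℝ, g (1 - 2 * u) = u ^ b * (Sfun i (b+1) u) ^ 2 := by
      intro u
      rw [hg]
      simp only
      rw [jacobi_comp]
      have : (1 - (1 - 2*u))/2 = u := by ring
      rw [this]
    rw [show (∫ u in (0:ℝ)..1, g (1 - 2*u)) = ∫ u in (0:ℝ)..1, u ^ b * (Sfun i (b+1) u) ^ 2
      from intervalIntegral.integral_congr (fun u _ => hgu u)]
    rw [main_u i b]
    have hbR : ((b : ℝ) + 1) = 2 * (N : ℝ) + 3 - 2 * (i : ℝ) := by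
      rw [hb]
      push_cast [Nat.cast_sub hiN]
      ring
    rw [hbR]
    ring
  · exact div_pos two_pos hden
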